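/- With the subdivision setup below, for n ≥ 2 and any two distinct indices i ≠ j in Fin e', the average over σ ∈ S of the squared distance between the centers of mass of the intermediate clouds on edges i and j satisfies (1/#S) Σ_{σ∈S} ‖μ(X^σ_i) − μ(X^σ_j)‖² = ‖m'_i − m'_j‖² + (n²(n+1)/(12(n−1)²))·(Rg²(W_i) + Rg²(W_j)), where m'_i = (X'(head i) + X'(tail i))/2 and W_i = (w(i,1),…,w(i,n)) is a point cloud with unit weights. -/

import Mathlib

open Finset

/-- Center of mass of a weighted point cloud. -/
noncomputable def com {V : Type*} [Fintype V] {d : ℕ}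
    (X : V → EuclideanSpace ℝ (Fin d)) (Ω : V → ℝ) : EuclideanSpace ℝ (Fin d) :=
  (∑ v, Ω v)⁻¹ • ∑ v, Ω v • X v

/-- Weighted squared radius of gyration of a point cloud. -/
noncomputable def rg2 {V : Type*} [Fintype V] {d : ℕ}
    (X : V → EuclideanSpace ℝ (Fin d)) (Ω : V → ℝ) : ℝ :=
  (∑ v, Ω v)⁻¹ * ∑ v, Ω v * ‖X v - com X Ω‖ ^ 2

/-- Center of mass with unit weights. -/
noncomputable def uMu {V : Type*} [Fintype V] {d : ℕ}
    (X : V → EuclideanSpace ℝ (Fin d)) : EuclideanSpace ℝ (Fin d) :=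
  (Fintype.card V : ℝ)⁻¹ • ∑ v, X v

/-- Squared radius of gyration with unit weights. -/
noncomputable def uRg2 {V : Type*} [Fintype V] {d : ℕ}
    (X : V → EuclideanSpace ℝ (Fin d)) : ℝ :=
  (Fintype.card V : ℝ)⁻¹ * ∑ v, ‖X v - uMu X‖ ^ 2

/-- Position of the `j`-th intermediate vertex (1-indexed position `j+1`) on the
subdivided edge `i`, for the permuted displacement vectors: `x^σ_{i,j}` equals
`X'(tail i)` plus the first `j+1` permuted displacements. -/
noncomputable def xpos {d n v' e' : ℕ}
    (X' : Fin v' → EuclideanSpace ℝ (Fin d)) (tl : Fin e' → Fin v')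
    (w : Fin e' → Fin n → EuclideanSpace ℝ (Fin d))
    (σ : Fin e' → Equiv.Perm (Fin n)) (i : Fin e') (j : Fin (n - 1)) :
    EuclideanSpace ℝ (Fin d) :=
  X' (tl i) + ∑ k : Fin n, if (k : ℕ) ≤ (j : ℕ) then w i (σ i k) else 0

lemma card_filter_le_fin (N κ : ℕ) :
    ((Finset.univ.filter fun j : Fin N => κ ≤ (j:ℕ))).card = N - κ := by
  rw [Finset.card_filter, Fin.sum_univ_eq_sum_range (fun j => if κ ≤ j then 1 else 0) N,
    ← Finset.card_filter, Finset.range_eq_Ico, Finset.Ico_filter_le,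
    max_eq_right (Nat.zero_le _), Nat.card_Ico]

lemma sum_eval_one {ι β M : Type*} [Fintype ι] [DecidableEq ι] [Fintype β] [AddCommMonoid M]
    (i : ι) (f : β → M) :
    ∑ σ : ι → β, f (σ i) = (Fintype.card β)^(Fintype.card ι - 1) • ∑ b, f b := by
  rw [← Equiv.sum_comp (Equiv.funSplitAt i β).symm (fun σ => f (σ i))]
  have h1 : ∀ p : β × ({ j // j ≠ i } → β), ((Equiv.funSplitAt i β).symm p) i = p.1 := by
    intro p; simp [Equiv.funSplitAt, Equiv.piSplitAt]
  simp only [h1]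
  rw [Fintype.sum_prod_type]
  simp only [Finset.sum_const, Finset.card_univ]
  rw [← Finset.sum_nsmul]
  congr 1
  rw [Fintype.card_fun, Fintype.card_subtype_compl, Fintype.card_subtype_eq]

lemma sum_eval_two {ι β M : Type*} [Fintype ι] [DecidableEq ι] [Fintype β] [AddCommMonoid M]
    {i j : ι} (hij : i ≠ j) (f : β → β → M) :
    ∑ σ : ι → β, f (σ i) (σ j) = (Fintype.card β)^(Fintype.card ι - 2) • ∑ a, ∑ b, f a b := by
  rw [← Equiv.sum_comp (Equiv.funSplitAt i β).symm (fun σ => f (σ i) (σ j))]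
  have h1 : ∀ p : β × ({ k // k ≠ i } → β), ((Equiv.funSplitAt i β).symm p) i = p.1 := by
    intro p; simp [Equiv.funSplitAt, Equiv.piSplitAt]
  have h2 : ∀ p : β × ({ k // k ≠ i } → β), ((Equiv.funSplitAt i β).symm p) j
      = p.2 ⟨j, hij.symm⟩ := by
    intro p; simp [Equiv.funSplitAt, Equiv.piSplitAt, hij.symm]
  simp only [h1, h2]
  rw [Fintype.sum_prod_type]
  have h3 : ∀ a : β, ∑ r : { k // k ≠ i } → β, f a (r ⟨j, hij.symm⟩)
      = (Fintype.card β)^(Fintype.card { k // k ≠ i } - 1) • ∑ b, f a b :=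
    fun a => sum_eval_one (⟨j, hij.symm⟩ : { k // k ≠ i }) (f a)
  simp only [h3]
  rw [← Finset.smul_sum]
  congr 2
  rw [Fintype.card_subtype_compl, Fintype.card_subtype_eq]; omega

lemma perm_sum_indep {n : ℕ} {M : Type*} [AddCommMonoid M] (f : Fin n → M) (k k' : Fin n) :
    ∑ τ : Equiv.Perm (Fin n), f (τ k) = ∑ τ : Equiv.Perm (Fin n), f (τ k') := by
  rw [← Equiv.sum_comp (Equiv.mulRight (Equiv.swap k k')) (fun τ => f (τ k'))]
  apply Finset.sum_congr rfl
  intro τ _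
  simp [Equiv.Perm.mul_apply]

lemma perm_sum_one {n : ℕ} {M : Type*} [AddCommMonoid M] (k : Fin n) (f : Fin n → M) :
    n • ∑ τ : Equiv.Perm (Fin n), f (τ k) = (n.factorial) • ∑ m, f m := by
  have h1 : ∑ k' : Fin n, ∑ τ : Equiv.Perm (Fin n), f (τ k')
      = n • ∑ τ : Equiv.Perm (Fin n), f (τ k) := by
    rw [Finset.sum_congr rfl (fun k' _ => perm_sum_indep f k' k)]
    simp [Finset.card_univ]
  rw [← h1, Finset.sum_comm]
  have h2 : ∀ τ : Equiv.Perm (Fin n), ∑ k' : Fin n, f (τ k') = ∑ m, f m :=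
    fun τ => Equiv.sum_comp τ f
  simp only [h2, Finset.sum_const, Finset.card_univ, Fintype.card_perm, Fintype.card_fin]

lemma perm_pair_indep {n : ℕ} {M : Type*} [AddCommMonoid M] (g : Fin n → Fin n → M)
    {k l k' l' : Fin n} (hkl : k ≠ l) (hkl' : k' ≠ l') :
    ∑ τ : Equiv.Perm (Fin n), g (τ k) (τ l) = ∑ τ : Equiv.Perm (Fin n), g (τ k') (τ l') := by
  set s1 := Equiv.swap k' k with hs1
  set π := Equiv.swap (s1 l') l * s1 with hπ
  have hπk : π k' = k := by
    rw [hπ, Equiv.Perm.mul_apply, hs1, Equiv.swap_apply_left]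
    apply Equiv.swap_apply_of_ne_of_ne
    · intro h
      exact hkl' (Equiv.injective s1 (by rw [← h, Equiv.swap_apply_left]))
    · exact hkl
  have hπl : π l' = l := by
    rw [hπ, Equiv.Perm.mul_apply, Equiv.swap_apply_left]
  rw [← Equiv.sum_comp (Equiv.mulRight π) (fun τ => g (τ k') (τ l'))]
  apply Finset.sum_congr rfl
  intro τ _
  simp only [Equiv.coe_mulRight, Equiv.Perm.mul_apply, hπk, hπl]

lemma perm_sum_two {n : ℕ} {M : Type*} [AddCommMonoid M] {k l : Fin n} (hkl : k ≠ l)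
    (g : Fin n → Fin n → M) :
    (n * (n-1)) • ∑ τ : Equiv.Perm (Fin n), g (τ k) (τ l)
      = (n.factorial) • ∑ m, ∑ m' ∈ Finset.univ.erase m, g m m' := by
  have hcard : ∀ p : Fin n, (Finset.univ.erase p).card = n - 1 := by
    intro p; rw [Finset.card_erase_of_mem (Finset.mem_univ p), Finset.card_univ,
      Fintype.card_fin]
  have h1 : ∑ p : Fin n, ∑ q ∈ Finset.univ.erase p, (∑ τ : Equiv.Perm (Fin n), g (τ p) (τ q))
      = (n * (n-1)) • ∑ τ : Equiv.Perm (Fin n), g (τ k) (τ l) := by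
    rw [Finset.sum_congr rfl (fun p _ => Finset.sum_congr rfl
      (fun q hq => perm_pair_indep g (Finset.ne_of_mem_erase hq).symm hkl))]
    rw [Finset.sum_congr rfl (fun p (_ : p ∈ Finset.univ) => by
      rw [Finset.sum_const, hcard p])]
    rw [Finset.sum_const, Finset.card_univ, Fintype.card_fin, smul_smul]
  rw [← h1]
  have h2 : ∀ p : Fin n, ∑ q ∈ Finset.univ.erase p, ∑ τ : Equiv.Perm (Fin n), g (τ p) (τ q)
      = ∑ τ : Equiv.Perm (Fin n), ∑ q ∈ Finset.univ.erase p, g (τ p) (τ q) :=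
    fun p => Finset.sum_comm
  simp only [h2]
  rw [Finset.sum_comm]
  have h3 : ∀ τ : Equiv.Perm (Fin n), ∑ p : Fin n, ∑ q ∈ Finset.univ.erase p, g (τ p) (τ q)
      = ∑ m, ∑ m' ∈ Finset.univ.erase m, g m m' := by
    intro τ
    have inner : ∀ p : Fin n, ∑ q ∈ Finset.univ.erase p, g (τ p) (τ q)
        = ∑ m' ∈ Finset.univ.erase (τ p), g (τ p) m' := by
      intro p
      apply Finset.sum_nbij' (fun q => τ q) (fun m' => τ.symm m')
      · intro q hq
        simp only [Finset.mem_erase, Finset.mem_univ, and_true] at *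
        exact fun h => hq (τ.injective h)
      · intro m' hm'
        simp only [Finset.mem_erase, Finset.mem_univ, and_true] at *
        exact fun h => hm' (by rw [← h]; simp)
      · intro q _; simp
      · intro m' _; simp
      · intro q _; rfl
    simp only [inner]
    exact Equiv.sum_comp τ (fun m => ∑ m' ∈ Finset.univ.erase m, g m m')
  simp only [h3, Finset.sum_const, Finset.card_univ, Fintype.card_perm, Fintype.card_fin]

lemma perm_avg_one {n : ℕ} (hn : 0 < n) {M : Type*} [AddCommGroup M] [Module ℝ M]
    (k : Fin n) (f : Fin n → M) :
    ∑ τ : Equiv.Perm (Fin n), f (τ k) = ((n.factorial : ℝ)/(n:ℝ)) • ∑ m, f m := by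
  have h := perm_sum_one k f
  have hn' : (n:ℝ) ≠ 0 := Nat.cast_ne_zero.mpr hn.ne'
  have h' : (n:ℝ) • ∑ τ : Equiv.Perm (Fin n), f (τ k) = ((n.factorial:ℝ)) • ∑ m, f m := by
    rw [Nat.cast_smul_eq_nsmul, Nat.cast_smul_eq_nsmul]; exact h
  calc ∑ τ : Equiv.Perm (Fin n), f (τ k)
      = (n:ℝ)⁻¹ • ((n:ℝ) • ∑ τ : Equiv.Perm (Fin n), f (τ k)) := (inv_smul_smul₀ hn' _).symm
    _ = ((n.factorial : ℝ)/(n:ℝ)) • ∑ m, f m := by rw [h', smul_smul]; congr 1; field_simp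

lemma perm_avg_two {n : ℕ} (hn : 2 ≤ n) {M : Type*} [AddCommGroup M] [Module ℝ M]
    {k l : Fin n} (hkl : k ≠ l) (g : Fin n → Fin n → M) :
    ∑ τ : Equiv.Perm (Fin n), g (τ k) (τ l)
      = ((n.factorial : ℝ)/((n:ℝ)*((n:ℝ)-1))) • ∑ m, ∑ m' ∈ Finset.univ.erase m, g m m' := by
  have h := perm_sum_two hkl g
  have hc : ((n * (n-1) : ℕ) : ℝ) = (n:ℝ)*((n:ℝ)-1) := by
    push_cast [Nat.cast_sub (by omega : 1 ≤ n)]; ring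
  have hne : (n:ℝ)*((n:ℝ)-1) ≠ 0 := by
    have h1 : (1:ℝ) ≤ (n:ℝ) - 1 := by
      have : (2:ℝ) ≤ (n:ℝ) := by exact_mod_cast hn
      linarith
    positivity
  have h' : ((n:ℝ)*((n:ℝ)-1)) • ∑ τ : Equiv.Perm (Fin n), g (τ k) (τ l)
      = ((n.factorial:ℝ)) • ∑ m, ∑ m' ∈ Finset.univ.erase m, g m m' := by
    rw [← hc, Nat.cast_smul_eq_nsmul, Nat.cast_smul_eq_nsmul]; exact h
  calc ∑ τ : Equiv.Perm (Fin n), g (τ k) (τ l)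
      = ((n:ℝ)*((n:ℝ)-1))⁻¹ • (((n:ℝ)*((n:ℝ)-1)) • ∑ τ : Equiv.Perm (Fin n), g (τ k) (τ l)) :=
        (inv_smul_smul₀ hne _).symm
    _ = _ := by rw [h', smul_smul]; congr 1; field_simp

lemma sum_range_cast (N : ℕ) : ∑ i ∈ range N, (i:ℝ) = (N:ℝ)*((N:ℝ)-1)/2 := by
  induction N with
  | zero => simp
  | succ m ih => rw [Finset.sum_range_succ, ih]; push_cast; ring

lemma sum_range_sq_cast (N : ℕ) :
    ∑ i ∈ range N, (i:ℝ)^2 = (N:ℝ)*((N:ℝ)-1)*(2*(N:ℝ)-1)/6 := by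
  induction N with
  | zero => simp
  | succ m ih => rw [Finset.sum_range_succ, ih]; push_cast; ring

lemma sum_x_cast {n : ℕ} :
    ∑ k : Fin n, ((n - 1 - (k:ℕ) : ℕ) : ℝ) = (n:ℝ)*((n:ℝ)-1)/2 := by
  have h1 : ∀ k : Fin n, (n - 1 - (k:ℕ) : ℕ) = (Fin.rev k : ℕ) := by
    intro k; rw [Fin.val_rev]; omega
  simp only [h1]
  have h2 : ∑ k : Fin n, ((Fin.rev k : ℕ) : ℝ)
      = ∑ k : Fin n, ((k : ℕ) : ℝ) := by
    have := Equiv.sum_comp (Fin.revPerm : Equiv.Perm (Fin n)) (fun k : Fin n => ((k:ℕ):ℝ))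
    simpa using this
  rw [h2, Fin.sum_univ_eq_sum_range (fun i => (i:ℝ)) n, sum_range_cast]

lemma sum_x_sq_cast {n : ℕ} :
    ∑ k : Fin n, ((n - 1 - (k:ℕ) : ℕ) : ℝ)^2 = (n:ℝ)*((n:ℝ)-1)*(2*(n:ℝ)-1)/6 := by
  have h1 : ∀ k : Fin n, (n - 1 - (k:ℕ) : ℕ) = (Fin.rev k : ℕ) := by
    intro k; rw [Fin.val_rev]; omega
  simp only [h1]
  have h2 : ∑ k : Fin n, ((Fin.rev k : ℕ) : ℝ)^2
      = ∑ k : Fin n, ((k : ℕ) : ℝ)^2 := by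
    have := Equiv.sum_comp (Fin.revPerm : Equiv.Perm (Fin n)) (fun k : Fin n => ((k:ℕ):ℝ)^2)
    simpa using this
  rw [h2, Fin.sum_univ_eq_sum_range (fun i => (i:ℝ)^2) n, sum_range_sq_cast]

lemma sum_a_zero {n : ℕ} (hn : 2 ≤ n) :
    ∑ k : Fin n, (((n - 1 - (k:ℕ) : ℕ) : ℝ)/((n:ℝ)-1) - 2⁻¹) = 0 := by
  have hne : (n:ℝ) - 1 ≠ 0 := by
    have : (2:ℝ) ≤ (n:ℝ) := by exact_mod_cast hn
    intro h; linarith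
  rw [Finset.sum_sub_distrib, Finset.sum_const, Finset.card_univ, Fintype.card_fin,
    ← Finset.sum_div, sum_x_cast]
  field_simp
  ring

lemma sum_a_sq {n : ℕ} (hn : 2 ≤ n) :
    ∑ k : Fin n, (((n - 1 - (k:ℕ) : ℕ) : ℝ)/((n:ℝ)-1) - 2⁻¹)^2
      = (n:ℝ)*((n:ℝ)+1)/(12*((n:ℝ)-1)) := by
  have hne : (n:ℝ) - 1 ≠ 0 := by
    have : (2:ℝ) ≤ (n:ℝ) := by exact_mod_cast hn
    intro h; linarith
  have hterm : ∀ k : Fin n, (((n - 1 - (k:ℕ) : ℕ) : ℝ)/((n:ℝ)-1) - 2⁻¹)^2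
      = ((n - 1 - (k:ℕ) : ℕ) : ℝ)^2 * (((n:ℝ)-1)^2)⁻¹
        - ((n - 1 - (k:ℕ) : ℕ) : ℝ) * ((n:ℝ)-1)⁻¹ + 4⁻¹ := by
    intro k
    field_simp
    ring
  rw [Finset.sum_congr rfl (fun k _ => hterm k), Finset.sum_add_distrib,
    Finset.sum_sub_distrib, ← Finset.sum_mul, ← Finset.sum_mul, sum_x_cast, sum_x_sq_cast,
    Finset.sum_const, Finset.card_univ, Fintype.card_fin]
  field_simp
  ring

lemma uRg2_eq {d n : ℕ} (hn : 0 < n) (f : Fin n → EuclideanSpace ℝ (Fin d)) :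
    uRg2 f = (n:ℝ)⁻¹ * ∑ m, ‖f m‖^2 - ((n:ℝ)⁻¹)^2 * ‖∑ m, f m‖^2 := by
  have hn' : (n:ℝ) ≠ 0 := Nat.cast_ne_zero.mpr hn.ne'
  have hmu : uMu f = (n:ℝ)⁻¹ • ∑ m, f m := by
    rw [uMu, Fintype.card_fin]
  have hterm : ∀ m, ‖f m - uMu f‖^2
      = ‖f m‖^2 - 2 * ((n:ℝ)⁻¹ * inner ℝ (f m) (∑ m', f m')) + ((n:ℝ)⁻¹)^2 * ‖∑ m', f m'‖^2 := by
    intro m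
    rw [norm_sub_sq_real, hmu, real_inner_smul_right, norm_smul]
    congr 1
    rw [mul_pow]
    congr 1
    rw [Real.norm_eq_abs, sq_abs]
  rw [uRg2, Fintype.card_fin]
  rw [Finset.sum_congr rfl (fun m _ => hterm m)]
  rw [Finset.sum_add_distrib, Finset.sum_sub_distrib, Finset.sum_const, Finset.card_univ,
    Fintype.card_fin]
  rw [← Finset.mul_sum, ← Finset.mul_sum, ← sum_inner, real_inner_self_eq_norm_sq]
  field_simp
  have hnn : (n:ℝ)^2 * ((n:ℝ)⁻¹)^2 = 1 := by rw [← mul_pow, mul_inv_cancel₀ hn', one_pow]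
  linear_combination (‖∑ i, f i‖ ^ 2) * hnn

lemma mean_zero {d n : ℕ} (hn : 0 < n) (a : Fin n → ℝ) (ha : ∑ k, a k = 0)
    (f : Fin n → EuclideanSpace ℝ (Fin d)) :
    ∑ τ : Equiv.Perm (Fin n), ∑ k, a k • f (τ k) = 0 := by
  rw [Finset.sum_comm]
  have h1 : ∀ k, ∑ τ : Equiv.Perm (Fin n), a k • f (τ k)
      = a k • (((n.factorial : ℝ)/(n:ℝ)) • ∑ m, f m) := by
    intro k
    rw [← Finset.smul_sum, perm_avg_one hn]
  rw [Finset.sum_congr rfl (fun k _ => h1 k), ← Finset.sum_smul, ha, zero_smul]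

lemma var_perm {d n : ℕ} (hn : 2 ≤ n) (a : Fin n → ℝ) (ha : ∑ k, a k = 0)
    (f : Fin n → EuclideanSpace ℝ (Fin d)) :
    ∑ τ : Equiv.Perm (Fin n), ‖∑ k, a k • f (τ k)‖^2
      = (n.factorial : ℝ) * ((∑ k, (a k)^2) * ((n:ℝ)/((n:ℝ)-1)) * uRg2 f) := by
  have hn0 : 0 < n := by omega
  have hnR : (n:ℝ) ≠ 0 := Nat.cast_ne_zero.mpr hn0.ne'
  have hn1R : (n:ℝ) - 1 ≠ 0 := by
    have : (2:ℝ) ≤ (n:ℝ) := by exact_mod_cast hn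
    intro h; linarith
  -- expand the norm squared
  have hexp : ∀ τ : Equiv.Perm (Fin n), ‖∑ k, a k • f (τ k)‖^2
      = ∑ k, ∑ l, a k * a l * inner ℝ (f (τ k)) (f (τ l)) := by
    intro τ
    rw [← real_inner_self_eq_norm_sq, sum_inner]
    apply Finset.sum_congr rfl
    intro k _
    rw [real_inner_smul_left, inner_sum, Finset.mul_sum]
    apply Finset.sum_congr rfl
    intro l _
    rw [real_inner_smul_right]
    ring
  simp only [hexp]
  -- split diagonal and off-diagonal
  have hsplit : ∀ τ : Equiv.Perm (Fin n), ∑ k, ∑ l, a k * a l * inner ℝ (f (τ k)) (f (τ l))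
      = (∑ k, (a k)^2 * ‖f (τ k)‖^2)
        + ∑ k, ∑ l ∈ Finset.univ.erase k, a k * a l * inner ℝ (f (τ k)) (f (τ l)) := by
    intro τ
    rw [← Finset.sum_add_distrib]
    apply Finset.sum_congr rfl
    intro k _
    rw [← Finset.add_sum_erase _ _ (Finset.mem_univ k), real_inner_self_eq_norm_sq]
    ring_nf
  simp only [hsplit]
  rw [Finset.sum_add_distrib]
  -- diagonal part
  have hdiag : ∑ τ : Equiv.Perm (Fin n), ∑ k, (a k)^2 * ‖f (τ k)‖^2
      = ((n.factorial : ℝ)/(n:ℝ)) * (∑ k, (a k)^2) * (∑ m, ‖f m‖^2) := by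
    rw [Finset.sum_comm]
    have h1 : ∀ k, ∑ τ : Equiv.Perm (Fin n), (a k)^2 * ‖f (τ k)‖^2
        = (a k)^2 * (((n.factorial : ℝ)/(n:ℝ)) * ∑ m, ‖f m‖^2) := by
      intro k
      rw [← Finset.mul_sum]
      congr 1
      have := perm_avg_one hn0 (M := ℝ) k (fun m => ‖f m‖^2)
      simpa [smul_eq_mul] using this
    rw [Finset.sum_congr rfl (fun k _ => h1 k), ← Finset.sum_mul]
    ring
  -- off-diagonal part
  have hoff : ∑ τ : Equiv.Perm (Fin n), ∑ k, ∑ l ∈ Finset.univ.erase k,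
        a k * a l * inner ℝ (f (τ k)) (f (τ l))
      = ((n.factorial : ℝ)/((n:ℝ)*((n:ℝ)-1))) * (∑ k, ∑ l ∈ Finset.univ.erase k, a k * a l)
        * (∑ m, ∑ m' ∈ Finset.univ.erase m, (inner ℝ (f m) (f m') : ℝ)) := by
    rw [Finset.sum_comm]
    have h1 : ∀ k, ∑ τ : Equiv.Perm (Fin n), ∑ l ∈ Finset.univ.erase k,
          a k * a l * inner ℝ (f (τ k)) (f (τ l))
        = ∑ l ∈ Finset.univ.erase k, a k * a l *
            (((n.factorial : ℝ)/((n:ℝ)*((n:ℝ)-1))) *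
              ∑ m, ∑ m' ∈ Finset.univ.erase m, (inner ℝ (f m) (f m') : ℝ)) := by
      intro k
      rw [Finset.sum_comm]
      apply Finset.sum_congr rfl
      intro l hl
      rw [← Finset.mul_sum]
      congr 1
      have hkl : k ≠ l := (Finset.ne_of_mem_erase hl).symm
      have := perm_avg_two hn (M := ℝ) hkl (fun m m' => (inner ℝ (f m) (f m') : ℝ))
      simpa [smul_eq_mul] using this
    rw [Finset.sum_congr rfl (fun k _ => h1 k)]
    simp only [← Finset.sum_mul]
    ring
  rw [hdiag, hoff]
  -- algebraic identities
  have hP : ∑ m, ∑ m' ∈ Finset.univ.erase m, (inner ℝ (f m) (f m') : ℝ)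
      = ‖∑ m, f m‖^2 - ∑ m, ‖f m‖^2 := by
    have h1 : ∀ m, ∑ m' ∈ Finset.univ.erase m, (inner ℝ (f m) (f m') : ℝ)
        = (∑ m', (inner ℝ (f m) (f m') : ℝ)) - ‖f m‖^2 := by
      intro m
      rw [← Finset.add_sum_erase _ _ (Finset.mem_univ m), real_inner_self_eq_norm_sq]
      ring
    rw [Finset.sum_congr rfl (fun m _ => h1 m), Finset.sum_sub_distrib]
    congr 1
    rw [← real_inner_self_eq_norm_sq, sum_inner]
    exact Finset.sum_congr rfl (fun m _ => (inner_sum _ _ _).symm)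
  have hA : ∑ k, ∑ l ∈ Finset.univ.erase k, a k * a l = - ∑ k, (a k)^2 := by
    have h1 : ∀ k, ∑ l ∈ Finset.univ.erase k, a k * a l
        = a k * (∑ l, a l) - (a k)^2 := by
      intro k
      have h2 := Finset.add_sum_erase Finset.univ (fun l => a k * a l) (Finset.mem_univ k)
      rw [Finset.mul_sum, ← h2]
      ring
    rw [Finset.sum_congr rfl (fun k _ => h1 k), Finset.sum_sub_distrib]
    simp [ha]
  rw [hP, hA, uRg2_eq hn0 f]
  field_simp
  ring

lemma uMu_xpos {d n v' e' : ℕ} (hn : 2 ≤ n) (tl : Fin e' → Fin v')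
    (X' : Fin v' → EuclideanSpace ℝ (Fin d)) (w : Fin e' → Fin n → EuclideanSpace ℝ (Fin d))
    (σ : Fin e' → Equiv.Perm (Fin n)) (i : Fin e') :
    uMu (fun k : Fin (n - 1) => xpos X' tl w σ i k)
      = X' (tl i) + ∑ k : Fin n, (((n - 1 - (k:ℕ) : ℕ) : ℝ)/((n:ℝ)-1)) • w i (σ i k) := by
  have hcast : ((n - 1 : ℕ) : ℝ) = (n:ℝ) - 1 := by
    push_cast [Nat.cast_sub (by omega : 1 ≤ n)]; ring
  have hne : (n:ℝ) - 1 ≠ 0 := by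
    have : (2:ℝ) ≤ (n:ℝ) := by exact_mod_cast hn
    intro h; linarith
  rw [uMu, Fintype.card_fin]
  have hsum : ∑ j : Fin (n-1), xpos X' tl w σ i j
      = (n-1) • X' (tl i) + ∑ k : Fin n, (n - 1 - (k:ℕ)) • w i (σ i k) := by
    simp only [xpos]
    rw [Finset.sum_add_distrib, Finset.sum_const, Finset.card_univ, Fintype.card_fin]
    congr 1
    rw [Finset.sum_comm]
    apply Finset.sum_congr rfl
    intro k _
    rw [← Finset.sum_filter, Finset.sum_const, card_filter_le_fin]
  rw [hsum, smul_add, Finset.smul_sum]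
  congr 1
  · rw [← Nat.cast_smul_eq_nsmul ℝ, smul_smul, hcast, inv_mul_cancel₀ hne, one_smul]
  · apply Finset.sum_congr rfl
    intro k _
    rw [← Nat.cast_smul_eq_nsmul ℝ (n - 1 - (k:ℕ)), smul_smul, hcast]
    congr 1
    field_simp

/-- For distinct edges `i ≠ j`, the average over `σ ∈ S` of the squared distance
between the centers of mass of the intermediate clouds on edges `i` and `j` equals
`‖m'ᵢ − m'ⱼ‖² + (n²(n+1)/(12(n−1)²))·(Rg²(Wᵢ) + Rg²(Wⱼ))`. -/
theorem average_sq_dist_centers_of_mass {d n v' e' : ℕ} (hd : 1 ≤ d) (hn : 2 ≤ n)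
    (he' : 2 ≤ e') (head tl : Fin e' → Fin v')
    (X' : Fin v' → EuclideanSpace ℝ (Fin d))
    (w : Fin e' → Fin n → EuclideanSpace ℝ (Fin d))
    (hw : ∀ i, ∑ j, w i j = X' (head i) - X' (tl i))
    (i j : Fin e') (hij : i ≠ j) :
    (Fintype.card (Fin e' → Equiv.Perm (Fin n)) : ℝ)⁻¹ *
        ∑ σ : Fin e' → Equiv.Perm (Fin n),
          ‖uMu (fun k : Fin (n - 1) => xpos X' tl w σ i k)
            - uMu (fun k : Fin (n - 1) => xpos X' tl w σ j k)‖ ^ 2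
      = ‖(2 : ℝ)⁻¹ • (X' (head i) + X' (tl i))
            - (2 : ℝ)⁻¹ • (X' (head j) + X' (tl j))‖ ^ 2
        + ((n : ℝ) ^ 2 * ((n : ℝ) + 1) / (12 * ((n : ℝ) - 1) ^ 2)) *
            (uRg2 (w i) + uRg2 (w j)) := by
  classical
  have hn0 : 0 < n := by omega
  have hnR : (n:ℝ) ≠ 0 := Nat.cast_ne_zero.mpr hn0.ne'
  have hn1R : (n:ℝ) - 1 ≠ 0 := by
    have : (2:ℝ) ≤ (n:ℝ) := by exact_mod_cast hn
    intro h; linarith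
  set a : Fin n → ℝ := fun k => ((n - 1 - (k:ℕ) : ℕ) : ℝ)/((n:ℝ)-1) - 2⁻¹ with ha_def
  have ha : ∑ k, a k = 0 := sum_a_zero hn
  have ha2 : ∑ k, (a k)^2 = (n:ℝ)*((n:ℝ)+1)/(12*((n:ℝ)-1)) := sum_a_sq hn
  set A : Fin e' → Equiv.Perm (Fin n) → EuclideanSpace ℝ (Fin d) :=
    fun e τ => ∑ k, a k • w e (τ k) with hA_def
  set mm : Fin e' → EuclideanSpace ℝ (Fin d) :=
    fun e => (2:ℝ)⁻¹ • (X' (head e) + X' (tl e)) with hm_def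
  have hAzero : ∀ e : Fin e', ∑ τ : Equiv.Perm (Fin n), A e τ = 0 := by
    intro e
    simp only [hA_def]
    exact mean_zero hn0 a ha (w e)
  have hmu : ∀ (σ : Fin e' → Equiv.Perm (Fin n)) (e : Fin e'),
      uMu (fun k : Fin (n - 1) => xpos X' tl w σ e k) = mm e + A e (σ e) := by
    intro σ e
    rw [uMu_xpos hn tl X' w σ e]
    have hsub : A e (σ e)
        = (∑ k : Fin n, (((n - 1 - (k:ℕ) : ℕ) : ℝ)/((n:ℝ)-1)) • w e (σ e k))
          - (2:ℝ)⁻¹ • (X' (head e) - X' (tl e)) := by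
      simp only [hA_def, ha_def, sub_smul]
      rw [Finset.sum_sub_distrib]
      congr 1
      rw [← Finset.smul_sum]
      congr 1
      rw [Equiv.sum_comp (σ e) (w e), hw e]
    rw [hsub]
    simp only [hm_def]
    module
  have hsummand : ∀ σ : Fin e' → Equiv.Perm (Fin n),
      ‖uMu (fun k : Fin (n - 1) => xpos X' tl w σ i k)
        - uMu (fun k : Fin (n - 1) => xpos X' tl w σ j k)‖ ^ 2
      = ‖mm i - mm j‖^2
        + (‖A i (σ i)‖^2 + ‖A j (σ j)‖^2)
        + (2 * inner ℝ (mm i - mm j) (A i (σ i))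
           - 2 * inner ℝ (mm i - mm j) (A j (σ j))
           - 2 * inner ℝ (A i (σ i)) (A j (σ j))) := by
    intro σ
    rw [hmu σ i, hmu σ j]
    have h1 : (mm i + A i (σ i)) - (mm j + A j (σ j))
        = (mm i - mm j) + (A i (σ i) - A j (σ j)) := by abel
    rw [h1, norm_add_sq_real, norm_sub_sq_real (A i (σ i)) (A j (σ j)), inner_sub_right]
    ring
  rw [Finset.sum_congr rfl (fun σ _ => hsummand σ)]
  simp only [Finset.sum_add_distrib, Finset.sum_sub_distrib]
  have hT1 : ∑ _σ : Fin e' → Equiv.Perm (Fin n), ‖mm i - mm j‖^2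
      = (Fintype.card (Fin e' → Equiv.Perm (Fin n)) : ℝ) * ‖mm i - mm j‖^2 := by
    rw [Finset.sum_const, Finset.card_univ, nsmul_eq_mul]
  have hvar : ∀ e : Fin e', ∑ σ : Fin e' → Equiv.Perm (Fin n), ‖A e (σ e)‖^2
      = ((n.factorial)^(e'-1) : ℕ) *
          ((n.factorial : ℝ) * ((∑ k, (a k)^2) * ((n:ℝ)/((n:ℝ)-1)) * uRg2 (w e))) := by
    intro e
    rw [sum_eval_one e (fun τ => ‖A e τ‖^2), Fintype.card_perm, Fintype.card_fin,
      Fintype.card_fin, ← Nat.cast_smul_eq_nsmul ℝ, smul_eq_mul]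
    congr 1
    simp only [hA_def]
    exact var_perm hn a ha (w e)
  have hzero1 : ∀ e : Fin e', ∑ σ : Fin e' → Equiv.Perm (Fin n),
      2 * (inner ℝ (mm i - mm j) (A e (σ e)) : ℝ) = 0 := by
    intro e
    rw [sum_eval_one e (fun τ => 2 * (inner ℝ (mm i - mm j) (A e τ) : ℝ))]
    have h0 : ∑ τ : Equiv.Perm (Fin n), 2 * (inner ℝ (mm i - mm j) (A e τ) : ℝ) = 0 := by
      rw [← Finset.mul_sum, ← inner_sum, hAzero e, inner_zero_right, mul_zero]
    rw [h0, smul_zero]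
  have hzero2 : ∑ σ : Fin e' → Equiv.Perm (Fin n),
      2 * (inner ℝ (A i (σ i)) (A j (σ j)) : ℝ) = 0 := by
    rw [sum_eval_two hij (fun x y => 2 * (inner ℝ (A i x) (A j y) : ℝ))]
    have h0 : ∑ x : Equiv.Perm (Fin n), ∑ y : Equiv.Perm (Fin n),
        2 * (inner ℝ (A i x) (A j y) : ℝ) = 0 := by
      have : ∀ x : Equiv.Perm (Fin n), ∑ y : Equiv.Perm (Fin n),
          2 * (inner ℝ (A i x) (A j y) : ℝ) = 0 := by
        intro x
        rw [← Finset.mul_sum, ← inner_sum, hAzero j, inner_zero_right, mul_zero]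
      simp only [this, Finset.sum_const, smul_zero]
    rw [h0, smul_zero]
  rw [hT1, hvar i, hvar j, hzero1 i, hzero1 j, hzero2, ha2]
  have hcardF : (Fintype.card (Fin e' → Equiv.Perm (Fin n)) : ℝ)
      = ((n.factorial : ℝ))^(e') := by
    rw [Fintype.card_fun, Fintype.card_perm, Fintype.card_fin, Fintype.card_fin]
    push_cast
    ring
  rw [hcardF]
  have hFpow : (((n.factorial)^(e'-1) : ℕ) : ℝ) = ((n.factorial : ℝ))^(e'-1) := by
    push_cast; ring
  rw [hFpow]
  have hFne : ((n.factorial : ℝ)) ≠ 0 := by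
    exact_mod_cast (Nat.factorial_pos n).ne'
  have hcomb : ∀ x : ℝ, ((n.factorial : ℝ))^(e'-1) * ((n.factorial : ℝ) * x)
      = ((n.factorial : ℝ))^(e') * x := by
    intro x
    rw [← mul_assoc, ← pow_succ]
    congr 2
    omega
  rw [hcomb, hcomb]
  have hFpowne : ((n.factorial : ℝ))^(e') ≠ 0 := pow_ne_zero _ hFne
  have hD : ‖(2:ℝ)⁻¹ • (X' (head i) + X' (tl i)) - (2:ℝ)⁻¹ • (X' (head j) + X' (tl j))‖
      = ‖mm i - mm j‖ := by simp only [hm_def]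
  rw [hD]
  field_simp
  ring
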